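/- Let G be a discrete group, I a nonempty set, T = I × G × I, and let (m_λ)_{λ∈Λ} be a bounded approximate diagonal for ℓ¹(G). For each finite nonempty subset F ⊆ I and λ ∈ Λ, set W_{F,λ} := (1/#F) Σ_{i,j∈F} E^{m_λ}_{(i,j,j,i)} ∈ ℓ¹(T × T). Then for every a ∈ ℓ¹(T), the inequality ‖a·W_{F,λ} − W_{F,λ}·a‖ ≤ Σ_{u,v∈F} ‖a_{(u,v)}·m_λ − m_λ·a_{(u,v)}‖ + Σ_{v∈F, u∈I∖F} ‖a_{(u,v)}·m_λ‖ + Σ_{u∈F, v∈I∖F} ‖m_λ·a_{(u,v)}‖ holds, where a_{(u,v)} ∈ ℓ¹(G) is defined by a_{(u,v)}(g) := a(u,g,v). -/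

import Mathlib

open Filter Topology
open scoped ENNReal TensorProduct Classical

noncomputable section

/-- The Banach space `ℓ¹(X)` of absolutely summable complex functions on `X`. -/
abbrev l1 (X : Type*) : Type _ := lp (fun _ : X => ℂ) 1

section Defs

variable {I G : Type*} [Group G]

/-- The multiplication of the Brandt semigroup `S = B(I,G) = (I × G × I) ∪ {o}`,
where the zero element `o` is encoded as `none`. -/
def brandtMul : Option (I × G × I) → Option (I × G × I) → Option (I × G × I)
  | some (i, g, j), some (i', g', j') => if j = i' then some (i, g * g', j') else none
  | _, _ => none

/-- Spec: `mul` is the convolution product on `ℓ¹(T)`, `T = I × G × I`: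
`(ab)(i,g,j) = Σ_{k ∈ I, h ∈ G} a(i, g h⁻¹, k) b(k, h, j)`. -/
def IsConvT (mul : l1 (I × G × I) → l1 (I × G × I) → l1 (I × G × I)) : Prop :=
  ∀ (a b : l1 (I × G × I)) (i : I) (g : G) (j : I),
    mul a b (i, g, j) = ∑' p : I × G, a (i, g * p.2⁻¹, p.1) * b (p.1, p.2, j)

/-- Spec: `mul` is the convolution product on the group algebra `ℓ¹(G)`. -/
def IsConvG (mul : l1 G → l1 G → l1 G) : Prop :=
  ∀ (a b : l1 G) (g : G), mul a b g = ∑' h : G, a (g * h⁻¹) * b h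

/-- Spec: `act` is the left module action of `ℓ¹(T)` on `ℓ¹(T × T) = ℓ¹(T) ⊗̂ ℓ¹(T)`,
determined by `a·(x ⊗ y) = (ax) ⊗ y`. -/
def IsLeftActT
    (act : l1 (I × G × I) → l1 ((I × G × I) × (I × G × I)) → l1 ((I × G × I) × (I × G × I))) :
    Prop :=
  ∀ (a : l1 (I × G × I)) (w : l1 ((I × G × I) × (I × G × I))) (i : I) (g : G) (j : I)
    (t' : I × G × I),
    act a w ((i, g, j), t') = ∑' p : I × G, a (i, g * p.2⁻¹, p.1) * w ((p.1, p.2, j), t')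

/-- Spec: `act` is the right module action of `ℓ¹(T)` on `ℓ¹(T × T) = ℓ¹(T) ⊗̂ ℓ¹(T)`,
determined by `(x ⊗ y)·a = x ⊗ (ya)`. -/
def IsRightActT
    (act : l1 ((I × G × I) × (I × G × I)) → l1 (I × G × I) → l1 ((I × G × I) × (I × G × I))) :
    Prop :=
  ∀ (w : l1 ((I × G × I) × (I × G × I))) (a : l1 (I × G × I)) (t : I × G × I) (i : I) (g : G)
    (j : I),
    act w a (t, (i, g, j)) = ∑' p : I × G, w (t, (i, g * p.2⁻¹, p.1)) * a (p.1, p.2, j)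

/-- Spec: `d` is the diagonal map `π : ℓ¹(T × T) = ℓ¹(T) ⊗̂ ℓ¹(T) → ℓ¹(T)`,
determined by `δ_x ⊗ δ_y ↦ δ_x δ_y`. -/
def IsDiagT (d : l1 ((I × G × I) × (I × G × I)) → l1 (I × G × I)) : Prop :=
  ∀ (w : l1 ((I × G × I) × (I × G × I))) (i : I) (g : G) (j : I),
    d w (i, g, j) = ∑' p : I × G, w ((i, g * p.2⁻¹, p.1), (p.1, p.2, j))

/-- Spec: `act` is the left module action of `ℓ¹(G)` on `ℓ¹(G × G) = ℓ¹(G) ⊗̂ ℓ¹(G)`. -/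
def IsLeftActG (act : l1 G → l1 (G × G) → l1 (G × G)) : Prop :=
  ∀ (a : l1 G) (w : l1 (G × G)) (g g' : G),
    act a w (g, g') = ∑' h : G, a (g * h⁻¹) * w (h, g')

/-- Spec: `act` is the right module action of `ℓ¹(G)` on `ℓ¹(G × G) = ℓ¹(G) ⊗̂ ℓ¹(G)`. -/
def IsRightActG (act : l1 (G × G) → l1 G → l1 (G × G)) : Prop :=
  ∀ (w : l1 (G × G)) (a : l1 G) (g g' : G),
    act w a (g, g') = ∑' h : G, w (g, g' * h⁻¹) * a h

/-- Spec: `d` is the diagonal map `π : ℓ¹(G × G) = ℓ¹(G) ⊗̂ ℓ¹(G) → ℓ¹(G)`. -/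
def IsDiagG (d : l1 (G × G) → l1 G) : Prop :=
  ∀ (w : l1 (G × G)) (g : G), d w g = ∑' h : G, w (g * h⁻¹, h)

/-- Spec: `mul` is the convolution product on the semigroup algebra `ℓ¹(S)`, `S = B(I,G)`:
`(ab)(s) = Σ_{u v = s} a(u) b(v)`. -/
def IsConvS (mul : l1 (Option (I × G × I)) → l1 (Option (I × G × I)) →
    l1 (Option (I × G × I))) : Prop :=
  ∀ (a b : l1 (Option (I × G × I))) (s : Option (I × G × I)),
    mul a b s =
      ∑' p : {p : Option (I × G × I) × Option (I × G × I) // brandtMul p.1 p.2 = s},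
        a p.val.1 * b p.val.2

/-- Spec: left module action of `ℓ¹(S)` on `ℓ¹(S × S) = ℓ¹(S) ⊗̂ ℓ¹(S)`. -/
def IsLeftActS (act : l1 (Option (I × G × I)) →
    l1 (Option (I × G × I) × Option (I × G × I)) →
    l1 (Option (I × G × I) × Option (I × G × I))) : Prop :=
  ∀ (a : l1 (Option (I × G × I))) (w : l1 (Option (I × G × I) × Option (I × G × I)))
    (s s' : Option (I × G × I)),
    act a w (s, s') =
      ∑' p : {p : Option (I × G × I) × Option (I × G × I) // brandtMul p.1 p.2 = s},
        a p.val.1 * w (p.val.2, s')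

/-- Spec: right module action of `ℓ¹(S)` on `ℓ¹(S × S) = ℓ¹(S) ⊗̂ ℓ¹(S)`. -/
def IsRightActS (act : l1 (Option (I × G × I) × Option (I × G × I)) →
    l1 (Option (I × G × I)) →
    l1 (Option (I × G × I) × Option (I × G × I))) : Prop :=
  ∀ (w : l1 (Option (I × G × I) × Option (I × G × I))) (a : l1 (Option (I × G × I)))
    (s s' : Option (I × G × I)),
    act w a (s, s') =
      ∑' p : {p : Option (I × G × I) × Option (I × G × I) // brandtMul p.1 p.2 = s'},
        w (s, p.val.1) * a p.val.2

/-- Spec: the diagonal map `π : ℓ¹(S × S) = ℓ¹(S) ⊗̂ ℓ¹(S) → ℓ¹(S)`. -/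
def IsDiagS (d : l1 (Option (I × G × I) × Option (I × G × I)) → l1 (Option (I × G × I))) :
    Prop :=
  ∀ (w : l1 (Option (I × G × I) × Option (I × G × I))) (s : Option (I × G × I)),
    d w s =
      ∑' p : {p : Option (I × G × I) × Option (I × G × I) // brandtMul p.1 p.2 = s},
        w p.val

/-- Spec: `E` sends `b ∈ ℓ¹(G × G)` and `i,j,i',j' ∈ I` to the element
`E^b_{(i,j,i',j')} ∈ ℓ¹(T × T)`. -/
def IsE (E : l1 (G × G) → I → I → I → I → l1 ((I × G × I) × (I × G × I))) : Prop :=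
  ∀ (b : l1 (G × G)) (i j i' j' : I),
    (∀ g g' : G, E b i j i' j' ((i, g, j), (i', g', j')) = b (g, g')) ∧
    (∀ (u v u' v' : I) (g g' : G), (u, v, u', v') ≠ (i, j, i', j') →
      E b i j i' j' ((u, g, v), (u', g', v')) = 0)

/-- Spec: `H` sends `c ∈ ℓ¹(G)` and `i,j ∈ I` to the element `H^c_{(i,j)} ∈ ℓ¹(T)`. -/
def IsH (H : l1 G → I → I → l1 (I × G × I)) : Prop :=
  ∀ (c : l1 G) (i j : I),
    (∀ g : G, H c i j (i, g, j) = c g) ∧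
    (∀ (u v : I) (g : G), (u, v) ≠ (i, j) → H c i j (u, g, v) = 0)

/-- Spec: `comp` sends `a ∈ ℓ¹(T)` and `u,v ∈ I` to `a_{(u,v)} ∈ ℓ¹(G)`,
`a_{(u,v)}(g) = a(u,g,v)`. -/
def IsComp (comp : l1 (I × G × I) → I → I → l1 G) : Prop :=
  ∀ (a : l1 (I × G × I)) (u v : I) (g : G), comp a u v g = a (u, g, v)

/-- The net `W_{F,λ} = (1/#F) Σ_{i,j ∈ F} E^{m_λ}_{(i,j,j,i)}` in `ℓ¹(T × T)`. -/
def Wnet (E : l1 (G × G) → I → I → I → I → l1 ((I × G × I) × (I × G × I)))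
    {Λ : Type*} (m : Λ → l1 (G × G)) (F : Finset I) (l : Λ) :
    l1 ((I × G × I) × (I × G × I)) :=
  (F.card : ℂ)⁻¹ • ∑ i ∈ F, ∑ j ∈ F, E (m l) i j j i

/-- `(m_λ)` is a bounded approximate diagonal for `ℓ¹(G)` (with respect to the given
realizations of the product, the module actions on `ℓ¹(G) ⊗̂ ℓ¹(G) = ℓ¹(G × G)` and
the diagonal map). -/
def IsBddApproxDiagG {Λ : Type*} [Preorder Λ]
    (mulG : l1 G → l1 G → l1 G) (actLG : l1 G → l1 (G × G) → l1 (G × G))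
    (actRG : l1 (G × G) → l1 G → l1 (G × G)) (piG : l1 (G × G) → l1 G)
    (m : Λ → l1 (G × G)) : Prop :=
  (∃ M : ℝ, ∀ l, ‖m l‖ ≤ M) ∧
  ∀ c : l1 G,
    Tendsto (fun l => actLG c (m l) - actRG (m l) c) atTop (𝓝 0) ∧
    Tendsto (fun l => mulG (piG (m l)) c) atTop (𝓝 c)

end Defs

/-- Pseudo-amenability of an `ℓ¹`-type Banach algebra `A = ℓ¹(X)`, whose projective tensor
square `A ⊗̂ A` is realized concretely as `M = ℓ¹(X × X)`: there is a net (equivalently, a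
nontrivial filtered family) `w` in `M` such that `a·w_n − w_n·a → 0` and `π(w_n)a → a` for
every `a ∈ A`. -/
def HasApproxDiag {A M : Type*} [NormedAddCommGroup A] [NormedAddCommGroup M]
    (mul : A → A → A) (actL : A → M → M) (actR : M → A → M) (diag : M → A) : Prop :=
  ∃ (ι : Type*) (F : Filter ι), F.NeBot ∧ ∃ w : ι → M,
    ∀ a : A,
      Tendsto (fun n => actL a (w n) - actR (w n) a) F (𝓝 0) ∧
      Tendsto (fun n => mul (diag (w n)) a) F (𝓝 a)

/-- A discrete group `G` is amenable: there is a left-invariant mean on `ℓ∞(G)`,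
i.e. a positive normalized left translation invariant linear functional. -/
def AmenableGroup (G : Type*) [Group G] : Prop :=
  ∃ m : lp (fun _ : G => ℝ) ∞ →ₗ[ℝ] ℝ,
    (∀ f : lp (fun _ : G => ℝ) ∞, (∀ x, 0 ≤ f x) → 0 ≤ m f) ∧
    (∀ f : lp (fun _ : G => ℝ) ∞, (∀ x, f x = 1) → m f = 1) ∧
    (∀ (g : G) (f f' : lp (fun _ : G => ℝ) ∞), (∀ x, f' x = f (g * x)) → m f' = m f)

/-- The projective tensor seminorm on the algebraic tensor product `A ⊗[ℂ] A`:
the infimum of `Σ ‖x_k‖ ‖y_k‖` over all finite representations `Σ x_k ⊗ y_k`. -/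
def projSeminorm (A : Type*) [NormedAddCommGroup A] [NormedSpace ℂ A] (x : A ⊗[ℂ] A) : ℝ :=
  sInf {r : ℝ | ∃ (n : ℕ) (f : Fin n → A × A),
    x = ∑ k, (f k).1 ⊗ₜ[ℂ] (f k).2 ∧ r = ∑ k, ‖(f k).1‖ * ‖(f k).2‖}

/-- A Banach algebra `A` is pseudo-amenable: there is a net (equivalently, a nontrivial
filtered family) `(w_n)` in `A ⊗̂ A` with `a·w_n − w_n·a → 0` and `π(w_n)a → a` for every
`a ∈ A`, where `π` is the diagonal map and `A ⊗̂ A` carries the projective tensor seminorm. -/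
def PseudoAmenable (A : Type*) [NonUnitalNormedRing A] [NormedSpace ℂ A]
    [SMulCommClass ℂ A A] [IsScalarTower ℂ A A] : Prop :=
  ∃ (ι : Type*) (F : Filter ι), F.NeBot ∧ ∃ w : ι → A ⊗[ℂ] A,
    ∀ a : A,
      Tendsto (fun n => projSeminorm A
        (TensorProduct.map (LinearMap.mulLeft ℂ a) LinearMap.id (w n) -
          TensorProduct.map LinearMap.id (LinearMap.mulRight ℂ a) (w n))) F (𝓝 0) ∧
      Tendsto (fun n => LinearMap.mul' ℂ A (w n) * a) F (𝓝 a)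


section Helpers

lemma l1_norm_eq {X : Type*} (f : l1 X) : ‖f‖ = ∑' x, ‖f x‖ := by
  rw [lp.norm_eq_tsum_rpow (by norm_num) f]
  simp

lemma l1_summable {X : Type*} (f : l1 X) : Summable fun x => ‖f x‖ := by
  have := (lp.memℓp f).summable (p := 1) (by norm_num)
  simpa using this

lemma Wval {G : Type*} [Group G] {I : Type*}
    {Λ : Type*} (m : Λ → l1 (G × G))
    (E : l1 (G × G) → I → I → I → I → l1 ((I × G × I) × (I × G × I))) (hE : IsE E)
    (F : Finset I) (l : Λ) (u : I) (h : G) (v u' : I) (h' : G) (v' : I) :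
    Wnet E m F l ((u, h, v), (u', h', v')) =
      if u ∈ F ∧ v ∈ F ∧ u' = v ∧ v' = u then (F.card : ℂ)⁻¹ * m l (h, h') else 0 := by
  have hterm : ∀ i j : I, E (m l) i j j i ((u, h, v), (u', h', v')) =
      if u = i ∧ v = j ∧ u' = j ∧ v' = i then m l (h, h') else 0 := by
    intro i j
    by_cases hc : u = i ∧ v = j ∧ u' = j ∧ v' = i
    · obtain ⟨rfl, rfl, rfl, rfl⟩ := hc
      rw [if_pos ⟨rfl, rfl, rfl, rfl⟩]
      exact (hE (m l) _ _ _ _).1 h h'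
    · rw [if_neg hc]
      refine (hE (m l) i j j i).2 u v u' v' h h' ?_
      simpa [Prod.ext_iff] using hc
  have hre : Wnet E m F l ((u, h, v), (u', h', v')) =
      (F.card : ℂ)⁻¹ * ∑ i ∈ F, ∑ j ∈ F,
        (if u = i ∧ v = j ∧ u' = j ∧ v' = i then m l (h, h') else 0) := by
    simp only [Wnet, lp.coeFn_smul, Pi.smul_apply, lp.coeFn_sum, Finset.sum_apply,
      smul_eq_mul, hterm]
  rw [hre]
  by_cases hQ : u ∈ F ∧ v ∈ F ∧ u' = v ∧ v' = u
  · obtain ⟨hu, hv, h3, h4⟩ := hQ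
    rw [if_pos ⟨hu, hv, h3, h4⟩]
    simp only [h3, h4]
    rw [Finset.sum_eq_single_of_mem u hu (fun i _ hi => Finset.sum_eq_zero fun j _ =>
        if_neg (by rintro ⟨rfl, -⟩; exact hi rfl)),
      Finset.sum_eq_single_of_mem v hv (fun j _ hj =>
        if_neg (by rintro ⟨-, rfl, -⟩; exact hj rfl)),
      if_pos ⟨rfl, rfl, rfl, rfl⟩]
  · rw [if_neg hQ]
    rw [Finset.sum_eq_zero fun i hi => Finset.sum_eq_zero fun j hj =>
      if_neg (by rintro ⟨rfl, rfl, rfl, rfl⟩; exact hQ ⟨hi, hj, rfl, rfl⟩), mul_zero]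


lemma actLTval {G : Type*} [Group G] {I : Type*} {Λ : Type*}
    (actLG : l1 G → l1 (G × G) → l1 (G × G)) (hactLG : IsLeftActG actLG)
    (m : Λ → l1 (G × G))
    (E : l1 (G × G) → I → I → I → I → l1 ((I × G × I) × (I × G × I))) (hE : IsE E)
    (comp : l1 (I × G × I) → I → I → l1 G) (hcomp : IsComp comp)
    (actLT : l1 (I × G × I) → l1 ((I × G × I) × (I × G × I)) → l1 ((I × G × I) × (I × G × I)))
    (hactLT : IsLeftActT actLT)
    (F : Finset I) (l : Λ) (a : l1 (I × G × I)) (u : I) (g : G) (v u' : I) (g' : G) (v' : I) :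
    actLT a (Wnet E m F l) ((u, g, v), (u', g', v')) =
      if v ∈ F ∧ u' = v ∧ v' ∈ F then (F.card : ℂ)⁻¹ * actLG (comp a u v') (m l) (g, g')
      else 0 := by
  rw [hactLT]
  by_cases hQ : v ∈ F ∧ u' = v ∧ v' ∈ F
  · obtain ⟨hv, h2, hv'⟩ := hQ
    rw [if_pos ⟨hv, h2, hv'⟩]
    have key : ∀ p : I × G, a (u, g * p.2⁻¹, p.1) * Wnet E m F l ((p.1, p.2, v), (u', g', v')) =
        (if p.1 = v' then (F.card : ℂ)⁻¹ * (a (u, g * p.2⁻¹, v') * m l (p.2, g')) else 0) := by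
      rintro ⟨k, hh⟩
      rw [Wval m E hE F l k hh v u' g' v']
      by_cases hk : k = v'
      · subst hk
        rw [if_pos ⟨hv', hv, h2, rfl⟩, if_pos rfl]
        ring
      · rw [if_neg (fun hc => hk (hc.2.2.2.symm)), if_neg hk, mul_zero]
    rw [tsum_congr key]
    have hinj : Function.Injective (fun hh : G => ((v', hh) : I × G)) := by
      intro x y hxy
      simpa using hxy
    rw [← hinj.tsum_eq ?_]
    · rw [tsum_congr (fun hh : G => if_pos rfl), tsum_mul_left]
      congr 1
      rw [hactLG]
      exact tsum_congr fun hh => by rw [hcomp]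
    · intro p hp
      rcases p with ⟨k, hh⟩
      by_cases hk : k = v'
      · exact ⟨hh, by rw [hk]⟩
      · exact absurd (if_neg hk) hp
  · rw [if_neg hQ]
    have key : ∀ p : I × G,
        a (u, g * p.2⁻¹, p.1) * Wnet E m F l ((p.1, p.2, v), (u', g', v')) = 0 := by
      rintro ⟨k, hh⟩
      rw [Wval m E hE F l k hh v u' g' v', if_neg, mul_zero]
      rintro ⟨hk, hv, h2, h4⟩
      exact hQ ⟨hv, h2, by rw [h4]; exact hk⟩
    rw [tsum_congr key, tsum_zero]

lemma actRTval {G : Type*} [Group G] {I : Type*} {Λ : Type*}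
    (actRG : l1 (G × G) → l1 G → l1 (G × G)) (hactRG : IsRightActG actRG)
    (m : Λ → l1 (G × G))
    (E : l1 (G × G) → I → I → I → I → l1 ((I × G × I) × (I × G × I))) (hE : IsE E)
    (comp : l1 (I × G × I) → I → I → l1 G) (hcomp : IsComp comp)
    (actRT : l1 ((I × G × I) × (I × G × I)) → l1 (I × G × I) → l1 ((I × G × I) × (I × G × I)))
    (hactRT : IsRightActT actRT)
    (F : Finset I) (l : Λ) (a : l1 (I × G × I)) (u : I) (g : G) (v u' : I) (g' : G) (v' : I) :
    actRT (Wnet E m F l) a ((u, g, v), (u', g', v')) =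
      if u ∈ F ∧ v ∈ F ∧ u' = v then (F.card : ℂ)⁻¹ * actRG (m l) (comp a u v') (g, g')
      else 0 := by
  rw [hactRT]
  by_cases hQ : u ∈ F ∧ v ∈ F ∧ u' = v
  · obtain ⟨hu, hv, h2⟩ := hQ
    rw [if_pos ⟨hu, hv, h2⟩]
    have key : ∀ p : I × G,
        Wnet E m F l ((u, g, v), (u', g' * p.2⁻¹, p.1)) * a (p.1, p.2, v') =
        (if p.1 = u then (F.card : ℂ)⁻¹ * (m l (g, g' * p.2⁻¹) * a (u, p.2, v')) else 0) := by
      rintro ⟨k, hh⟩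
      rw [Wval m E hE F l u g v u' (g' * hh⁻¹) k]
      by_cases hk : k = u
      · subst hk
        rw [if_pos ⟨hu, hv, h2, rfl⟩, if_pos rfl]
        ring
      · rw [if_neg (fun hc => hk (hc.2.2.2)), if_neg hk, zero_mul]
    rw [tsum_congr key]
    have hinj : Function.Injective (fun hh : G => ((u, hh) : I × G)) := by
      intro x y hxy
      simpa using hxy
    rw [← hinj.tsum_eq ?_]
    · rw [tsum_congr (fun hh : G => if_pos rfl), tsum_mul_left]
      congr 1
      rw [hactRG]
      exact tsum_congr fun hh => by rw [hcomp]
    · intro p hp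
      rcases p with ⟨k, hh⟩
      by_cases hk : k = u
      · exact ⟨hh, by rw [hk]⟩
      · exact absurd (if_neg hk) hp
  · rw [if_neg hQ]
    have key : ∀ p : I × G,
        Wnet E m F l ((u, g, v), (u', g' * p.2⁻¹, p.1)) * a (p.1, p.2, v') = 0 := by
      rintro ⟨k, hh⟩
      rw [Wval m E hE F l u g v u' (g' * hh⁻¹) k, if_neg, zero_mul]
      rintro ⟨hu, hv, h2, h4⟩
      exact hQ ⟨hu, hv, h2⟩
    rw [tsum_congr key, tsum_zero]

end Helpers

set_option maxHeartbeats 1000000 in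
theorem W_commutator_norm_bound {G : Type*} [Group G] {I : Type*} [Nonempty I]
    {Λ : Type*} [Preorder Λ] [IsDirected Λ (· ≤ ·)] [Nonempty Λ]
    (mulG : l1 G → l1 G → l1 G) (hmulG : IsConvG mulG)
    (actLG : l1 G → l1 (G × G) → l1 (G × G)) (hactLG : IsLeftActG actLG)
    (actRG : l1 (G × G) → l1 G → l1 (G × G)) (hactRG : IsRightActG actRG)
    (piG : l1 (G × G) → l1 G) (hpiG : IsDiagG piG)
    (m : Λ → l1 (G × G)) (hm : IsBddApproxDiagG mulG actLG actRG piG m)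
    (E : l1 (G × G) → I → I → I → I → l1 ((I × G × I) × (I × G × I))) (hE : IsE E)
    (comp : l1 (I × G × I) → I → I → l1 G) (hcomp : IsComp comp)
    (actLT : l1 (I × G × I) → l1 ((I × G × I) × (I × G × I)) → l1 ((I × G × I) × (I × G × I)))
    (hactLT : IsLeftActT actLT)
    (actRT : l1 ((I × G × I) × (I × G × I)) → l1 (I × G × I) → l1 ((I × G × I) × (I × G × I)))
    (hactRT : IsRightActT actRT)
    (F : Finset I) (hF : F.Nonempty) (l : Λ) (a : l1 (I × G × I)) :
    ‖actLT a (Wnet E m F l) - actRT (Wnet E m F l) a‖ ≤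
      (∑ u ∈ F, ∑ v ∈ F, ‖actLG (comp a u v) (m l) - actRG (m l) (comp a u v)‖) +
      (∑ v ∈ F, ∑' u : {u : I // u ∉ F}, ‖actLG (comp a u.val v) (m l)‖) +
      (∑ u ∈ F, ∑' v : {v : I // v ∉ F}, ‖actRG (m l) (comp a u v.val)‖) := by
  classical
  obtain ⟨v₀, hv₀⟩ := hF
  have hn : (F.card : ℝ) ≠ 0 := by
    have := Finset.card_pos.mpr ⟨v₀, hv₀⟩
    positivity
  have hnormn : ‖((F.card : ℂ))⁻¹‖ = (F.card : ℝ)⁻¹ := by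
    rw [norm_inv]
    norm_num
  set W := Wnet E m F l with hWdef
  set D := actLT a W - actRT W a with hDdef
  set L : I → I → l1 (G × G) := fun u v => actLG (comp a u v) (m l) with hLdef
  set R : I → I → l1 (G × G) := fun u v => actRG (m l) (comp a u v) with hRdef
  set X : I → I → l1 (G × G) := fun u v =>
    if u ∈ F then (if v ∈ F then L u v - R u v else R u v)
    else (if v ∈ F then L u v else 0) with hXdef
  have hD : ∀ (u : I) (g : G) (v u' : I) (g' : G) (v' : I),
      D ((u, g, v), (u', g', v')) =
        (if v ∈ F ∧ u' = v ∧ v' ∈ F then (F.card : ℂ)⁻¹ * L u v' (g, g') else 0)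
        - (if u ∈ F ∧ v ∈ F ∧ u' = v then (F.card : ℂ)⁻¹ * R u v' (g, g') else 0) := by
    intro u g v u' g' v'
    rw [hDdef, lp.coeFn_sub, Pi.sub_apply,
      actLTval actLG hactLG m E hE comp hcomp actLT hactLT F l a u g v u' g' v',
      actRTval actRG hactRG m E hE comp hcomp actRT hactRT F l a u g v u' g' v']
  have hDzero : ∀ (u : I) (g : G) (v u' : I) (g' : G) (v' : I), u' ≠ v ∨ v ∉ F →
      D ((u, g, v), (u', g', v')) = 0 := by
    intro u g v u' g' v' h
    rw [hD u g v u' g' v']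
    rcases h with h | h
    · rw [if_neg (fun hc => h hc.2.1), if_neg (fun hc => h hc.2.2), sub_zero]
    · rw [if_neg (fun hc => h hc.1), if_neg (fun hc => h hc.2.1), sub_zero]
  have hDnorm : ∀ (u : I) (g : G) (v : I) (g' : G) (v' : I), v ∈ F →
      ‖D ((u, g, v), (v, g', v'))‖ = (F.card : ℝ)⁻¹ * ‖X u v' (g, g')‖ := by
    intro u g v g' v' hv
    rw [hD u g v v g' v']
    by_cases hu : u ∈ F
    · by_cases hv' : v' ∈ F
      · rw [if_pos ⟨hv, rfl, hv'⟩, if_pos ⟨hu, hv, rfl⟩]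
        have hX : X u v' = L u v' - R u v' := by rw [hXdef]; simp [hu, hv']
        rw [hX, lp.coeFn_sub, Pi.sub_apply, ← mul_sub, norm_mul, hnormn]
      · rw [if_neg (fun hc => hv' hc.2.2), if_pos ⟨hu, hv, rfl⟩, zero_sub, norm_neg]
        have hX : X u v' = R u v' := by rw [hXdef]; simp [hu, hv']
        rw [hX, norm_mul, hnormn]
    · by_cases hv' : v' ∈ F
      · rw [if_pos ⟨hv, rfl, hv'⟩, if_neg (fun hc => hu hc.1), sub_zero]
        have hX : X u v' = L u v' := by rw [hXdef]; simp [hu, hv']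
        rw [hX, norm_mul, hnormn]
      · rw [if_neg (fun hc => hv' hc.2.2), if_neg (fun hc => hu hc.1), sub_zero,
          norm_zero]
        have hX : X u v' = 0 := by rw [hXdef]; simp [hu, hv']
        rw [hX, lp.coeFn_zero, Pi.zero_apply, norm_zero, mul_zero]
  set ψ : (I × I × I) × G × G → (I × G × I) × I × G × I := fun q =>
    ((q.1.2.1, q.2.1, q.1.1), (q.1.1, q.2.2, q.1.2.2)) with hψdef
  have hψinj : Function.Injective ψ := by
    rintro ⟨⟨v1, u1, w1⟩, g1, h1⟩ ⟨⟨v2, u2, w2⟩, g2, h2⟩ hq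
    simp only [hψdef, Prod.mk.injEq] at hq
    obtain ⟨⟨h1', h2', h3'⟩, h4', h5', h6'⟩ := hq
    simp_all
  set f : (I × I × I) × G × G → ℝ := fun q => ‖D (ψ q)‖ with hfdef
  have hsupp : Function.support (fun z : (I × G × I) × I × G × I => ‖D z‖) ⊆
      Set.range ψ := by
    rintro ⟨⟨u, g, v⟩, u', g', v'⟩ hz
    by_cases h : u' = v
    · exact ⟨((v, u, v'), g, g'), by rw [hψdef]; simp [h]⟩
    · refine absurd ?_ hz
      show ‖D ((u, g, v), (u', g', v'))‖ = 0
      rw [hDzero u g v u' g' v' (Or.inl h), norm_zero]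
  have hsum : Summable fun z : (I × G × I) × I × G × I => ‖D z‖ := l1_summable D
  have hfsum : Summable f := hsum.comp_injective hψinj
  have h1 : ∑' q, f q = ‖D‖ := by
    rw [l1_norm_eq D]
    exact hψinj.tsum_eq hsupp
  obtain ⟨hfib, hmarg⟩ := (summable_prod_of_nonneg (fun q => norm_nonneg _)).1 hfsum
  rw [Summable.tsum_prod' hfsum hfib] at h1
  have hinner : ∀ b : I × I × I, (∑' c : G × G, f (b, c)) =
      if b.1 ∈ F then (F.card : ℝ)⁻¹ * ‖X b.2.1 b.2.2‖ else 0 := by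
    rintro ⟨v, u, v'⟩
    by_cases hv : v ∈ F
    · rw [if_pos hv]
      have hc : ∀ c : G × G, f ((v, u, v'), c) = (F.card : ℝ)⁻¹ * ‖X u v' c‖ := by
        rintro ⟨g, g'⟩
        exact hDnorm u g v g' v' hv
      rw [tsum_congr hc, tsum_mul_left, l1_norm_eq (X u v')]
    · rw [if_neg hv]
      have hc : ∀ c : G × G, f ((v, u, v'), c) = 0 := by
        rintro ⟨g, g'⟩
        show ‖D _‖ = 0
        rw [hDzero u g v v g' v' (Or.inr hv), norm_zero]
      rw [tsum_congr hc, tsum_zero]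
  rw [tsum_congr hinner] at h1
  set gfun : I × I × I → ℝ := fun b =>
    if b.1 ∈ F then (F.card : ℝ)⁻¹ * ‖X b.2.1 b.2.2‖ else 0 with hgdef
  have hgnn : 0 ≤ gfun := by
    intro b
    rw [hgdef]
    by_cases h : b.1 ∈ F
    · simp only [if_pos h]
      positivity
    · simp [h]
  have hg : Summable gfun := hmarg.congr hinner
  obtain ⟨hgfib, -⟩ := (summable_prod_of_nonneg hgnn).1 hg
  rw [Summable.tsum_prod' hg hgfib] at h1
  set SX : ℝ := ∑' w : I × I, ‖X w.1 w.2‖ with hSXdef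
  have houter : ∀ v : I, (∑' w : I × I, gfun (v, w)) =
      if v ∈ F then (F.card : ℝ)⁻¹ * SX else 0 := by
    intro v
    by_cases hv : v ∈ F
    · rw [if_pos hv, hSXdef, ← tsum_mul_left]
      exact tsum_congr fun w => by rw [hgdef]; simp [hv]
    · rw [if_neg hv]
      have hz : ∀ w : I × I, gfun (v, w) = 0 := fun w => by rw [hgdef]; simp [hv]
      rw [tsum_congr hz, tsum_zero]
  rw [tsum_congr houter, tsum_eq_sum (s := F) (fun v hv => if_neg hv),
    Finset.sum_congr rfl (fun v hv => if_pos hv), Finset.sum_const, nsmul_eq_mul,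
    ← mul_assoc, mul_inv_cancel₀ hn, one_mul] at h1
  have hXsum : Summable (fun w : I × I => ‖X w.1 w.2‖) := by
    have h : Summable (fun w : I × I => (F.card : ℝ)⁻¹ * ‖X w.1 w.2‖) :=
      (hgfib v₀).congr (fun w => by rw [hgdef]; simp [hv₀])
    have h2 := h.mul_left (F.card : ℝ)
    refine h2.congr fun w => ?_
    field_simp
  obtain ⟨hXfib, hXmarg⟩ := (summable_prod_of_nonneg (fun w => norm_nonneg _)).1 hXsum
  have h2 : SX = ∑' u : I, ∑' v : I, ‖X u v‖ := Summable.tsum_prod' hXsum hXfib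
  set T : I → ℝ := fun u => ∑' v : I, ‖X u v‖ with hTdef
  have hT : Summable T := hXmarg
  have h3 : SX = (∑ u ∈ F, T u) + ∑' u : {u : I // u ∉ F}, T u.val := by
    rw [h2, ← Summable.sum_add_tsum_subtype_compl hT F]
  have hXfib' : ∀ u : I, Summable fun v : I => ‖X u v‖ :=
    fun u => (hXfib u).congr (fun v => rfl)
  have hTu : ∀ u ∈ F, T u = (∑ v ∈ F, ‖L u v - R u v‖) +
      ∑' v : {v : I // v ∉ F}, ‖R u v.val‖ := by
    intro u hu
    have e1 : T u = ∑' v : I, ‖X u v‖ := rfl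
    rw [e1, ← Summable.sum_add_tsum_subtype_compl (hXfib' u) F]
    congr 1
    · exact Finset.sum_congr rfl fun v hv => by rw [hXdef]; simp [hu, hv]
    · exact tsum_congr fun v => by
        rcases v with ⟨v, hv⟩
        rw [hXdef]
        simp [hu, hv]
  have hTu' : ∀ u : I, u ∉ F → T u = ∑ v ∈ F, ‖L u v‖ := by
    intro u hu
    have e1 : T u = ∑' v : I, ‖X u v‖ := rfl
    rw [e1, tsum_eq_sum (s := F) (fun v hv => by rw [hXdef]; simp [hu, hv])]
    exact Finset.sum_congr rfl fun v hv => by rw [hXdef]; simp [hu, hv]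
  have hLsub : ∀ v ∈ F, Summable fun u : {u : I // u ∉ F} => ‖L u.val v‖ := by
    intro v hv
    have hi : Function.Injective (fun u : I => ((u, v) : I × I)) := by
      intro x y hxy
      simpa using hxy
    have hs := (hXsum.comp_injective hi).subtype {u : I | u ∉ F}
    refine hs.congr fun u => ?_
    rcases u with ⟨u, hu⟩
    have hu' : u ∉ F := hu
    simp only [Function.comp_apply]
    rw [hXdef]
    simp [hu', hv]
  have h4 : ∑' u : {u : I // u ∉ F}, T u.val =
      ∑ v ∈ F, ∑' u : {u : I // u ∉ F}, ‖L u.val v‖ := by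
    rw [← Summable.tsum_finsetSum (fun v hv => hLsub v hv)]
    exact tsum_congr fun u => hTu' u.val u.2
  have h5 : (∑ u ∈ F, T u) = (∑ u ∈ F, ∑ v ∈ F, ‖L u v - R u v‖) +
      ∑ u ∈ F, ∑' v : {v : I // v ∉ F}, ‖R u v.val‖ := by
    rw [← Finset.sum_add_distrib]
    exact Finset.sum_congr rfl fun u hu => hTu u hu
  have hfinal : ‖D‖ = (∑ u ∈ F, ∑ v ∈ F, ‖L u v - R u v‖) +
      (∑ v ∈ F, ∑' u : {u : I // u ∉ F}, ‖L u.val v‖) +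
      ∑ u ∈ F, ∑' v : {v : I // v ∉ F}, ‖R u v.val‖ := by
    rw [← h1, h3, h4, h5]
    ring
  rw [hfinal]

end
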